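/- Let a₀ : ℝ → ℝ and let q : ℝ → ℝ³ be three times differentiable with q'''(t) + a₀(t) q(t) = 0 for all t. Then p(t) := q(t) × q'(t) is three times differentiable and satisfies p'''(t) − a₀(t) p(t) = 0 for all t. -/

import Mathlib

open Matrix

lemma cross_hasDerivAt {f g : ℝ → Fin 3 → ℝ} {f' g' : Fin 3 → ℝ} {t : ℝ}
    (hf : HasDerivAt f f' t) (hg : HasDerivAt g g' t) :
    HasDerivAt (fun s => f s ⨯₃ g s) (f' ⨯₃ g t + f t ⨯₃ g') t := by
  rw [hasDerivAt_pi] at hf hg ⊢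
  intro i
  fin_cases i
  · simp only [cross_apply]
    simp
    convert ((hf 1).mul (hg 2)).sub ((hf 2).mul (hg 1)) using 1
    · rfl
    · ring
  · simp only [cross_apply]
    simp
    convert ((hf 2).mul (hg 0)).sub ((hf 0).mul (hg 2)) using 1
    · rfl
    · ring
  · simp only [cross_apply]
    simp
    convert ((hf 0).mul (hg 1)).sub ((hf 1).mul (hg 0)) using 1
    · rfl
    · ring

/-- Projective duality preserves the Laguerre–Forsyth form: if `q''' + a₀ q = 0`
then the dual-curve lift `p = q × q'` is three times differentiable and satisfies
`p''' − a₀ p = 0`. -/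
theorem dual_curve_Laguerre_Forsyth (a₀ : ℝ → ℝ) (q : ℝ → Fin 3 → ℝ)
    (hq1 : Differentiable ℝ q)
    (hq2 : Differentiable ℝ (deriv q))
    (hq3 : Differentiable ℝ (deriv (deriv q)))
    (hode : ∀ t, deriv (deriv (deriv q)) t + a₀ t • q t = 0) :
    Differentiable ℝ (fun t => q t ⨯₃ deriv q t) ∧
    Differentiable ℝ (deriv (fun t => q t ⨯₃ deriv q t)) ∧
    Differentiable ℝ (deriv (deriv (fun t => q t ⨯₃ deriv q t))) ∧
    ∀ t, deriv (deriv (deriv (fun s => q s ⨯₃ deriv q s))) t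
      - a₀ t • (q t ⨯₃ deriv q t) = 0 := by
  have hd3 : ∀ t, deriv (deriv (deriv q)) t = -(a₀ t) • q t := by
    intro t
    have h := hode t
    rw [add_eq_zero_iff_eq_neg] at h
    rw [h, neg_smul]
  have h1 : ∀ t, HasDerivAt (fun s => q s ⨯₃ deriv q s)
      (q t ⨯₃ deriv (deriv q) t) t := by
    intro t
    have := cross_hasDerivAt (hq1 t).hasDerivAt (hq2 t).hasDerivAt
    simpa [cross_self] using this
  have e1 : deriv (fun s => q s ⨯₃ deriv q s)
      = fun t => q t ⨯₃ deriv (deriv q) t := funext fun t => (h1 t).deriv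
  have h2 : ∀ t, HasDerivAt (fun s => q s ⨯₃ deriv (deriv q) s)
      (deriv q t ⨯₃ deriv (deriv q) t) t := by
    intro t
    have := cross_hasDerivAt (hq1 t).hasDerivAt (hq3 t).hasDerivAt
    simpa [hd3 t, _root_.map_smul, cross_self] using this
  have e2 : deriv (deriv (fun s => q s ⨯₃ deriv q s))
      = fun t => deriv q t ⨯₃ deriv (deriv q) t := by
    rw [e1]; exact funext fun t => (h2 t).deriv
  have h3 : ∀ t, HasDerivAt (fun s => deriv q s ⨯₃ deriv (deriv q) s)
      (a₀ t • (q t ⨯₃ deriv q t)) t := by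
    intro t
    have := cross_hasDerivAt (hq2 t).hasDerivAt (hq3 t).hasDerivAt
    have key : deriv (deriv q) t ⨯₃ deriv (deriv q) t
        + deriv q t ⨯₃ deriv (deriv (deriv q)) t
        = a₀ t • (q t ⨯₃ deriv q t) := by
      rw [cross_self, zero_add, hd3 t, _root_.map_smul, ← cross_anticomm, neg_smul,
        smul_neg, neg_neg]
    rw [key] at this
    exact this
  refine ⟨fun t => (h1 t).differentiableAt, ?_, ?_, ?_⟩
  · rw [e1]; exact fun t => (h2 t).differentiableAt
  · rw [e2]; exact fun t => (h3 t).differentiableAt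
  · intro t
    rw [e2, (h3 t).deriv, sub_self]
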